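/- Let n ≥ 2 and let G_0 := (e_0e_0*, …, e_{n−1}e_{n−1}*). For each k ∈ {1,…,2n−3}, let v_k, w_k ∈ ℝ^{γ(n,k)} be vectors all of whose entries are nonzero. Let G be the concatenation G_0 ∪ (ι_1(v_1), ι_1(iw_1)) ∪ … ∪ (ι_{2n−3}(v_{2n−3}), ι_{2n−3}(iw_{2n−3})). Then the measurement M_G : H(n) → ℝ^{5n−6}, X ↦ (tr(G_j X))_j, is 1-complete, and |G| = 5n−6. -/

import Mathlib

open Matrix
open scoped ComplexOrder

noncomputable section

noncomputable def measOf {n : ℕ} {ι : Type*} [Fintype ι]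
    (G : ι → Matrix (Fin n) (Fin n) ℂ) :
    Matrix (Fin n) (Fin n) ℂ →ₗ[ℝ] EuclideanSpace ℝ ι where
  toFun X := WithLp.toLp 2 (fun i => ((G i * X).trace).re)
  map_add' X Y := by
    ext i
    simp [Matrix.mul_add]
  map_smul' r X := by
    ext i
    simp [Matrix.mul_smul, Matrix.trace_smul, Complex.real_smul]

def rComplete {n : ℕ} {ι : Type*} [Fintype ι]
    (M : Matrix (Fin n) (Fin n) ℂ →ₗ[ℝ] EuclideanSpace ℝ ι) (r : ℕ) : Prop :=
  ∀ X X' : Matrix (Fin n) (Fin n) ℂ, X.PosSemidef → X.rank ≤ r → X'.PosSemidef →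
    X ≠ X' → M X ≠ M X'

/-- `γ(n,k)`, the length of the upper half of the `k`-th anti-diagonal of an `n×n` matrix:
`⌈k/2⌉` if `k ≤ n−1` and `⌈n−1−k/2⌉` otherwise. -/
def gam (n k : ℕ) : ℕ := if k ≤ n - 1 then (k + 1) / 2 else n - 1 - k / 2

/-- Extension of a finite vector by zero. -/
def pad {m : ℕ} (v : Fin m → ℂ) : ℕ → ℂ := fun i => if h : i < m then v ⟨i, h⟩ else 0

/-- The inclusion `ι_k : ℂ^{γ(n,k)} → H(n)` into the upper half of the `k`-th anti-diagonal:
`(ι_k(v))_{jl} = v_j/√2` if `j+l = k`, `j < l`; `(ι_k(v))_{jl} = conj(v_l)/√2` if `j+l = k`,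
`l < j`; and `0` otherwise.  (The entries of `v` are indexed by the position along the upper
half of the anti-diagonal, whose rows start at `k − (n−1)` when `k > n−1`.) -/
noncomputable def iota (n k : ℕ) (v : Fin (gam n k) → ℂ) : Matrix (Fin n) (Fin n) ℂ :=
  fun j l =>
    if (j : ℕ) + (l : ℕ) = k ∧ (j : ℕ) < (l : ℕ) then
      pad v ((j : ℕ) - (k - (n - 1))) / (Real.sqrt 2 : ℂ)
    else if (j : ℕ) + (l : ℕ) = k ∧ (l : ℕ) < (j : ℕ) then
      starRingEnd ℂ (pad v ((l : ℕ) - (k - (n - 1)))) / (Real.sqrt 2 : ℂ)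
    else 0

section AuxLemmas

variable {n : ℕ}

lemma psd_row_zero {A : Matrix (Fin n) (Fin n) ℂ} (hA : A.PosSemidef)
    {j : Fin n} (h : A j j = 0) (l : Fin n) : A j l = 0 := by
  classical
  have hq : star (Pi.single j (1:ℂ)) ⬝ᵥ A *ᵥ Pi.single j 1 = 0 := by
    simp [h]
  have hker := congrFun ((hA.dotProduct_mulVec_zero_iff _).mp hq) l
  simp at hker
  rw [← hA.1.apply j l, hker, star_zero]

lemma rank_le_one_minor {A : Matrix (Fin n) (Fin n) ℂ} (h : A.rank ≤ 1)
    (p q r s : Fin n) : A p q * A r s = A p s * A r q := by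
  rw [Matrix.rank] at h
  obtain ⟨v0, hv0⟩ := finrank_le_one_iff.mp h
  have key : ∀ q : Fin n, ∃ c : ℂ, ∀ p, A p q = c * (v0 : (Fin n → ℂ)) p := by
    intro q
    have hmem : (fun p => A p q) ∈ LinearMap.range A.mulVecLin := by
      refine ⟨Pi.single q 1, ?_⟩
      simp [Matrix.mulVecLin_apply]; rfl
    obtain ⟨c, hc⟩ := hv0 ⟨_, hmem⟩
    refine ⟨c, fun p => ?_⟩
    have := congrArg (fun w : (LinearMap.range A.mulVecLin) => (w : Fin n → ℂ) p) hc
    simpa using this.symm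
  obtain ⟨cq, hcq⟩ := key q
  obtain ⟨cs, hcs⟩ := key s
  rw [hcq, hcs, hcq, hcs]; ring

lemma chain_step {X X' : Matrix (Fin n) (Fin n) ℂ}
    (hX : X.PosSemidef) (hX' : X'.PosSemidef)
    (hmin : ∀ p q r s : Fin n, X p q * X r s = X p s * X r q)
    {m j l : Fin n} (hmj : m ≠ j)
    (hmm0 : X m m ≠ 0)
    (hmm : X m m = X' m m) (hjj : X j j = X' j j)
    (h1 : X m j = X' m j) (h2 : X l m = X' l m) :
    X l j = X' l j := by
  classical
  set a : ℂ := X m j with ha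
  set u : Fin n → ℂ := Pi.single m a + Pi.single j (-(X m m)) with hu
  have hstaru : star u = Pi.single m (star a) + Pi.single j (star (-(X m m))) := by
    funext i
    simp only [hu, Pi.star_apply, Pi.add_apply, Pi.single_apply]
    split_ifs <;> simp_all
  have hXmm_real : star (X m m) = X m m := hX.1.apply m m
  have hXjm : X j m = star a := by rw [ha, ← hX.1.apply m j, star_star]
  have hX'jm : X' j m = star (X' m j) := by rw [← hX'.1.apply m j, star_star]
  have hminor : a * star a = X m m * X j j := by
    rw [ha, ← hXjm]; exact hmin m j j m
  have hq : star u ⬝ᵥ X' *ᵥ u = 0 := by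
    rw [hstaru, hu]
    simp only [Matrix.mulVec_add, Matrix.mulVec_single, add_dotProduct,
      single_dotProduct, Pi.add_apply, Pi.smul_apply, Matrix.col_apply,
      MulOpposite.smul_eq_mul_unop, MulOpposite.unop_op]
    rw [← hmm, ← hjj, ← h1, hX'jm, ← h1, star_neg, hXmm_real]
    linear_combination (-(X m m)) * hminor
  have hker := (hX'.dotProduct_mulVec_zero_iff u).mp hq
  have hl := congrFun hker l
  simp only [hu, Matrix.mulVec_add, Matrix.mulVec_single, Pi.add_apply, Pi.zero_apply,
    Pi.smul_apply, Matrix.col_apply, MulOpposite.smul_eq_mul_unop, MulOpposite.unop_op] at hl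
  have h3 : X' l m * a = X' l j * X m m := by linear_combination hl
  have h4 : X l j * X m m = X' l j * X m m := by
    rw [← hmin l m m j, h2, h3]
  exact mul_right_cancel₀ hmm0 h4

lemma trace_pair (A D : Matrix (Fin n) (Fin n) ℂ) {j l : Fin n} (hjl : j ≠ l)
    (h0 : ∀ p q : Fin n, ¬(p = j ∧ q = l) → ¬(p = l ∧ q = j) → A p q * D q p = 0) :
    (A * D).trace = A j l * D l j + A l j * D j l := by
  classical
  have htr : (A * D).trace = ∑ p : Fin n, ∑ q : Fin n, A p q * D q p := by
    simp [Matrix.trace, Matrix.diag, Matrix.mul_apply]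
  rw [htr, ← Finset.sum_product']
  have hne : ((j, l) : Fin n × Fin n) ≠ (l, j) := by
    intro h
    exact hjl (congrArg Prod.fst h)
  have hsub : ({(j, l), (l, j)} : Finset (Fin n × Fin n)) ⊆ Finset.univ ×ˢ Finset.univ := by
    intro x _; simp
  rw [← Finset.sum_subset hsub (fun x _ hx => by
    simp only [Finset.mem_insert, Finset.mem_singleton, not_or] at hx
    exact h0 x.1 x.2 (fun h => hx.1 (Prod.ext h.1 h.2)) (fun h => hx.2 (Prod.ext h.1 h.2)))]
  rw [Finset.sum_pair hne]

lemma iota_apply_of_ne {k : ℕ} (vc : Fin (gam n k) → ℂ) {p q : Fin n}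
    (h : (p:ℕ) + (q:ℕ) ≠ k) : iota n k vc p q = 0 := by
  simp [iota, h]

lemma iota_apply_lt {k : ℕ} (vc : Fin (gam n k) → ℂ) {p q : Fin n}
    (h : (p:ℕ) + (q:ℕ) = k) (hpq : (p:ℕ) < (q:ℕ)) (hb : (p:ℕ) - (k - (n-1)) < gam n k) :
    iota n k vc p q = vc ⟨(p:ℕ) - (k - (n-1)), hb⟩ / (Real.sqrt 2 : ℂ) := by
  simp only [iota]
  rw [if_pos ⟨h, hpq⟩]
  unfold pad
  rw [dif_pos hb]

lemma iota_apply_gt {k : ℕ} (vc : Fin (gam n k) → ℂ) {p q : Fin n}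
    (h : (p:ℕ) + (q:ℕ) = k) (hpq : (q:ℕ) < (p:ℕ)) (hb : (q:ℕ) - (k - (n-1)) < gam n k) :
    iota n k vc p q = starRingEnd ℂ (vc ⟨(q:ℕ) - (k - (n-1)), hb⟩) / (Real.sqrt 2 : ℂ) := by
  simp only [iota]
  rw [if_neg (fun hh => absurd hh.2 (by omega)), if_pos ⟨h, hpq⟩]
  unfold pad
  rw [dif_pos hb]

lemma key {n : ℕ} (hn : 2 ≤ n)
    (v w : (k : Fin (2 * n - 3)) → Fin (gam n ((k : ℕ) + 1)) → ℝ)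
    (hv : ∀ k j, v k j ≠ 0) (hw : ∀ k j, w k j ≠ 0)
    (X X' : Matrix (Fin n) (Fin n) ℂ) (hX : X.PosSemidef) (hrank : X.rank ≤ 1)
    (hX' : X'.PosSemidef)
    (hdiag : ∀ i, X i i = X' i i)
    (hmv : ∀ k : Fin (2*n-3),
      ((iota n ((k:ℕ)+1) (fun j => ((v k j : ℝ) : ℂ)) * (X' - X)).trace).re = 0)
    (hmw : ∀ k : Fin (2*n-3),
      ((iota n ((k:ℕ)+1) (fun j => Complex.I * ((w k j : ℝ) : ℂ)) * (X' - X)).trace).re = 0) :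
    X = X' := by
  classical
  have hmin := rank_le_one_minor hrank
  have hD : (X' - X).IsHermitian := hX'.1.sub hX.1
  have hsymm : ∀ p q : Fin n, X p q = X' p q → X q p = X' q p := by
    intro p q h
    calc X q p = star (X p q) := (hX.1.apply q p).symm
    _ = star (X' p q) := by rw [h]
    _ = X' q p := hX'.1.apply q p
  have main : ∀ s : ℕ, ∀ j l : Fin n, (j:ℕ) + (l:ℕ) = s → (j:ℕ) < (l:ℕ) → X j l = X' j l := by
    intro s
    induction s using Nat.strong_induction_on with
    | _ s IH =>
    intro j l hsum hlt
    have hchain : ∀ m p q : Fin n, (m:ℕ) < (p:ℕ) → (p:ℕ) < (q:ℕ) → (p:ℕ) + (q:ℕ) = s →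
        X m m ≠ 0 → X p q = X' p q := by
      intro m p q h1 h2 h3 hm0
      have e1 : X m p = X' m p := IH ((m:ℕ) + (p:ℕ)) (by omega) m p rfl (by omega)
      have e2 : X m q = X' m q := IH ((m:ℕ) + (q:ℕ)) (by omega) m q rfl (by omega)
      have hmp : m ≠ p := Fin.ne_of_val_ne (by omega)
      exact hsymm q p (chain_step hX hX' hmin hmp hm0 (hdiag m) (hdiag p) e1 (hsymm m q e2))
    by_cases hjj0 : X j j = 0
    · rw [psd_row_zero hX hjj0 l, psd_row_zero hX' (by rw [← hdiag j]; exact hjj0) l]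
    by_cases hex : ∃ m : Fin n, (m:ℕ) < (j:ℕ) ∧ X m m ≠ 0
    · obtain ⟨m, h1, h2⟩ := hex
      exact hchain m j l h1 hlt hsum h2
    push_neg at hex
    have hzero : ∀ p q : Fin n, (p:ℕ) + (q:ℕ) = s → ¬(p = j ∧ q = l) → ¬(p = l ∧ q = j) →
        (X' - X) q p = 0 := by
      intro p q hpq hn1 hn2
      have heq : X p q = X' p q → (X' - X) q p = 0 := fun h => by
        have h' := hsymm p q h
        simp [Matrix.sub_apply, h']
      rcases Nat.lt_trichotomy (p:ℕ) (q:ℕ) with hc | hc | hc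
      · rcases Nat.lt_trichotomy (p:ℕ) (j:ℕ) with hd | hd | hd
        · have hp0 : X p p = 0 := hex p hd
          apply heq
          rw [psd_row_zero hX hp0 q, psd_row_zero hX' (by rw [← hdiag p]; exact hp0) q]
        · exact absurd ⟨Fin.ext hd, Fin.ext (by omega)⟩ hn1
        · exact heq (hchain j p q hd hc hpq hjj0)
      · apply heq
        have hpq' : p = q := Fin.ext hc
        rw [hpq']
        exact hdiag q
      · have h' : X q p = X' q p := by
          rcases Nat.lt_trichotomy (q:ℕ) (j:ℕ) with hd | hd | hd
          · have hq0 : X q q = 0 := hex q hd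
            rw [psd_row_zero hX hq0 p, psd_row_zero hX' (by rw [← hdiag q]; exact hq0) p]
          · exact absurd ⟨Fin.ext (by omega), Fin.ext hd⟩ hn2
          · exact hchain j q p hd hc (by omega) hjj0
        simp [Matrix.sub_apply, h']
    have hjl : j ≠ l := Fin.ne_of_val_ne (by omega)
    have hlisLt := l.isLt
    obtain ⟨κ, hκ1⟩ : ∃ κ : Fin (2*n-3), (κ:ℕ) + 1 = s := by
      refine ⟨⟨s - 1, by omega⟩, by simp; omega⟩
    have hidx : (j:ℕ) - (s - (n-1)) < gam n s := by
      unfold gam; split <;> omega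
    rw [← hκ1] at hsum hzero hidx
    -- compute the trace for an arbitrary coefficient vector
    have hAgen : ∀ vc : Fin (gam n ((κ:ℕ)+1)) → ℂ,
        ((iota n ((κ:ℕ)+1) vc * (X' - X)).trace)
          = vc ⟨(j:ℕ) - (((κ:ℕ)+1) - (n-1)), hidx⟩ / (Real.sqrt 2 : ℂ) * (X' - X) l j
            + starRingEnd ℂ (vc ⟨(j:ℕ) - (((κ:ℕ)+1) - (n-1)), hidx⟩) / (Real.sqrt 2 : ℂ)
              * (X' - X) j l := by
      intro vc
      rw [trace_pair _ _ hjl (fun p q h1 h2 => by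
        by_cases hpq : (p:ℕ) + (q:ℕ) = (κ:ℕ)+1
        · rw [hzero p q hpq h1 h2, mul_zero]
        · rw [iota_apply_of_ne vc hpq, zero_mul])]
      rw [iota_apply_lt vc hsum hlt hidx, iota_apply_gt vc (by omega) hlt hidx]
    have hsqrt : Real.sqrt 2 ≠ 0 := by positivity
    have hre : ∀ vc : Fin (gam n ((κ:ℕ)+1)) → ℂ,
        ((iota n ((κ:ℕ)+1) vc * (X' - X)).trace).re = 0 →
        (vc ⟨(j:ℕ) - (((κ:ℕ)+1) - (n-1)), hidx⟩ * (X' - X) l j).re = 0 := by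
      intro vc h
      rw [hAgen vc] at h
      set c := vc ⟨(j:ℕ) - (((κ:ℕ)+1) - (n-1)), hidx⟩ with hc
      have hDconj : (X' - X) j l = star ((X' - X) l j) := (hD.apply j l).symm
      rw [hDconj] at h
      have hexp : c / (Real.sqrt 2 : ℂ) * (X' - X) l j
          + starRingEnd ℂ c / (Real.sqrt 2 : ℂ) * star ((X' - X) l j)
          = (c * (X' - X) l j + starRingEnd ℂ (c * (X' - X) l j)) / (Real.sqrt 2 : ℂ) := by
        rw [show (starRingEnd ℂ) (c * ((X' - X) l j))
            = (starRingEnd ℂ) c * star ((X' - X) l j) from map_mul _ _ _]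
        ring
      rw [hexp, Complex.add_conj, Complex.div_ofReal_re, Complex.ofReal_re] at h
      rcases div_eq_zero_iff.mp h with h' | h'
      · linarith
      · exact absurd h' hsqrt
    have hre1 := hre _ (hmv κ)
    have hre2 := hre _ (hmw κ)
    set d := (X' - X) l j with hd
    have hdre : d.re = 0 := by
      have hv0 := hv κ ⟨(j:ℕ) - (((κ:ℕ)+1) - (n-1)), hidx⟩
      simp only [Complex.mul_re, Complex.ofReal_re, Complex.ofReal_im, zero_mul, sub_zero] at hre1
      rcases mul_eq_zero.mp hre1 with h' | h'
      · exact absurd h' hv0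
      · exact h'
    have hdim : d.im = 0 := by
      have hw0 := hw κ ⟨(j:ℕ) - (((κ:ℕ)+1) - (n-1)), hidx⟩
      simp only [Complex.mul_re, Complex.mul_im, Complex.I_re, Complex.I_im, Complex.ofReal_re,
        Complex.ofReal_im, zero_mul, one_mul, mul_zero, zero_sub, zero_add, sub_zero] at hre2
      have : -(w κ ⟨(j:ℕ) - (((κ:ℕ)+1) - (n-1)), hidx⟩ * d.im) = 0 := by linarith [hre2]
      rcases mul_eq_zero.mp (neg_eq_zero.mp this) with h' | h'
      · exact absurd h' hw0
      · exact h'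
    have hd0 : d = 0 := Complex.ext hdre hdim
    have : X l j = X' l j := by
      have := sub_eq_zero.mp (show X' l j - X l j = 0 from hd0)
      exact this.symm
    exact hsymm l j this
  apply Matrix.ext
  intro p q
  rcases Nat.lt_trichotomy (p:ℕ) (q:ℕ) with hc | hc | hc
  · exact main ((p:ℕ)+(q:ℕ)) p q rfl hc
  · rw [Fin.ext hc]; exact hdiag q
  · exact hsymm q p (main ((q:ℕ)+(p:ℕ)) q p rfl hc)

end AuxLemmas

/-- the measurement built from `e_0e_0*, …, e_{n−1}e_{n−1}*` together with
`ι_k(v_k)` and `ι_k(i·w_k)` for `k = 1,…,2n−3`, where all entries of `v_k, w_k ∈ ℝ^{γ(n,k)}`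
are nonzero, is `1`-complete, with `5n−6` outcomes. -/
theorem stmt6 {n : ℕ} (hn : 2 ≤ n)
    (v w : (k : Fin (2 * n - 3)) → Fin (gam n ((k : ℕ) + 1)) → ℝ)
    (hv : ∀ k j, v k j ≠ 0) (hw : ∀ k j, w k j ≠ 0) :
    rComplete (measOf (fun idx : Fin n ⊕ Fin (2 * n - 3) × Bool =>
      match idx with
      | Sum.inl i => Matrix.single i i (1 : ℂ)
      | Sum.inr (k, false) => iota n ((k : ℕ) + 1) (fun j => ((v k j : ℝ) : ℂ))
      | Sum.inr (k, true) => iota n ((k : ℕ) + 1) (fun j => Complex.I * ((w k j : ℝ) : ℂ)))) 1 ∧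
    Fintype.card (Fin n ⊕ Fin (2 * n - 3) × Bool) = 5 * n - 6 := by
  constructor
  · intro X X' hX hrank hX' hne hM
    apply hne
    have hdiag : ∀ i : Fin n, X i i = X' i i := by
      intro i
      have h : ((Matrix.single i i (1:ℂ) * X).trace).re
          = ((Matrix.single i i (1:ℂ) * X').trace).re := congrArg (fun x => x (Sum.inl i)) hM
      have ht : ∀ Y : Matrix (Fin n) (Fin n) ℂ,
          (Matrix.single i i (1:ℂ) * Y).trace = Y i i := fun Y => by
        simp [Matrix.trace, Matrix.diag, Matrix.mul_apply, Matrix.single,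
          ite_and, Finset.sum_ite_eq, Finset.sum_ite_eq']
      rw [ht X, ht X'] at h
      have h1 : (X i i).im = 0 := by
        have := congrArg Complex.im (hX.1.apply i i)
        simp only [Complex.star_def, Complex.conj_im] at this
        linarith
      have h2 : (X' i i).im = 0 := by
        have := congrArg Complex.im (hX'.1.apply i i)
        simp only [Complex.star_def, Complex.conj_im] at this
        linarith
      exact Complex.ext h (by rw [h1, h2])
    have hmv : ∀ κ : Fin (2*n-3),
        ((iota n ((κ:ℕ)+1) (fun j => ((v κ j : ℝ) : ℂ)) * (X' - X)).trace).re = 0 := by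
      intro κ
      have h : ((iota n ((κ:ℕ)+1) (fun j => ((v κ j : ℝ) : ℂ)) * X).trace).re
          = ((iota n ((κ:ℕ)+1) (fun j => ((v κ j : ℝ) : ℂ)) * X').trace).re :=
        congrArg (fun x => x (Sum.inr (κ, false))) hM
      rw [Matrix.mul_sub, Matrix.trace_sub, Complex.sub_re, ← h, sub_self]
    have hmw : ∀ κ : Fin (2*n-3),
        ((iota n ((κ:ℕ)+1) (fun j => Complex.I * ((w κ j : ℝ) : ℂ)) * (X' - X)).trace).re = 0 := by
      intro κ
      have h : ((iota n ((κ:ℕ)+1) (fun j => Complex.I * ((w κ j : ℝ) : ℂ)) * X).trace).re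
          = ((iota n ((κ:ℕ)+1) (fun j => Complex.I * ((w κ j : ℝ) : ℂ)) * X').trace).re :=
        congrArg (fun x => x (Sum.inr (κ, true))) hM
      rw [Matrix.mul_sub, Matrix.trace_sub, Complex.sub_re, ← h, sub_self]
    exact key hn v w hv hw X X' hX hrank hX' hdiag hmv hmw
  · simp only [Fintype.card_sum, Fintype.card_prod, Fintype.card_fin, Fintype.card_bool]
    omega
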